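/- If F is nonempty, then the recession cone of F equals {v ∈ H : T_i v = 0 and ⟨c_i, v⟩ ≤ 0 for all i = 1,…,m}. -/

import Mathlib

noncomputable section
open Filter Topology RealInnerProductSpace

private lemma aux_Tv_zero {H : Type*} [NormedAddCommGroup H] [InnerProductSpace ℝ H]
    (T : H →L[ℝ] H) (hsa : ∀ x y : H, ⟪T x, y⟫ = ⟪x, T y⟫)
    (hpsd : ∀ x : H, 0 ≤ ⟪x, T x⟫) (v : H) (hv : ⟪v, T v⟫ = 0) : T v = 0 := by
  have key : ∀ x : H, ⟪x, T v⟫ = 0 := by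
    intro x
    by_contra hb
    set b := ⟪x, T v⟫ with hbdef
    set t : ℝ := -(⟪x, T x⟫ + 1) / (2 * b) with htdef
    have h := hpsd (x + t • v)
    have hcross : ⟪v, T x⟫ = b := by
      rw [← hsa v x, real_inner_comm]
    have hexp : ⟪x + t • v, T (x + t • v)⟫
        = ⟪x, T x⟫ + t * b + t * b + t * t * ⟪v, T v⟫ := by
      simp only [map_add, map_smul, inner_add_left, inner_add_right,
        real_inner_smul_left, real_inner_smul_right, hcross, ← hbdef]
      ring
    rw [hexp, hv] at h
    have h2tb : 2 * t * b = -(⟪x, T x⟫ + 1) := by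
      rw [htdef]; field_simp
    nlinarith [h, h2tb]
  have := key (T v)
  exact inner_self_eq_zero.mp this

theorem stmt0 {H : Type*} [NormedAddCommGroup H] [InnerProductSpace ℝ H] [CompleteSpace H]
    {m : ℕ} (T : Fin m → H →L[ℝ] H) (c : Fin m → H) (α : Fin m → ℝ)
    (hsa : ∀ i, ∀ x y : H, ⟪T i x, y⟫ = ⟪x, T i y⟫)
    (hpsd : ∀ i, ∀ x : H, 0 ≤ ⟪x, T i x⟫)
    (F : Set H)
    (hF : F = {x : H | ∀ i, (1 / 2) * ⟪x, T i x⟫ + ⟪c i, x⟫ + α i ≤ 0})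
    (hne : F.Nonempty) :
    {v : H | ∀ x ∈ F, ∀ t : ℝ, 0 ≤ t → x + t • v ∈ F} =
      {v : H | ∀ i, T i v = 0 ∧ ⟪c i, v⟫ ≤ 0} := by
  ext v
  simp only [Set.mem_setOf_eq]
  constructor
  · intro hv i
    obtain ⟨x₀, hx₀⟩ := hne
    have hx₀' : ∀ i, (1 / 2) * ⟪x₀, T i x₀⟫ + ⟪c i, x₀⟫ + α i ≤ 0 := by
      rw [hF] at hx₀; exact hx₀
    set A := ⟪v, T i v⟫ with hA
    set B := ⟪x₀, T i v⟫ + ⟪c i, v⟫ with hB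
    set C0 : ℝ := -((1 / 2) * ⟪x₀, T i x₀⟫ + ⟪c i, x₀⟫ + α i) with hC0
    clear_value A B C0
    have hC0nn : 0 ≤ C0 := by rw [hC0]; linarith [hx₀' i]
    have hcross : ⟪v, T i x₀⟫ = ⟪x₀, T i v⟫ := by
      rw [← hsa i v x₀, real_inner_comm]
    have hq : ∀ t : ℝ, 0 ≤ t → (1 / 2) * A * t ^ 2 + B * t ≤ C0 := by
      intro t ht
      have h := hv x₀ hx₀ t ht
      rw [hF] at h
      have h := h i
      have hexp : ⟪x₀ + t • v, T i (x₀ + t • v)⟫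
          = ⟪x₀, T i x₀⟫ + 2 * t * ⟪x₀, T i v⟫ + t ^ 2 * ⟪v, T i v⟫ := by
        simp only [map_add, map_smul, inner_add_left, inner_add_right,
          real_inner_smul_left, real_inner_smul_right, hcross]
        ring
      rw [hexp] at h
      simp only [inner_add_right, real_inner_smul_right] at h
      rw [hB, hC0, hA]
      nlinarith [h]
    have hAnn : 0 ≤ A := hA ▸ hpsd i v
    have hAzero : A = 0 := by
      by_contra hA0
      have hApos : 0 < A := lt_of_le_of_ne hAnn (Ne.symm hA0)
      set t : ℝ := 2 * (|B| + C0) / A + 1 with htdef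
      clear_value t
      have hdnn : 0 ≤ 2 * (|B| + C0) / A := div_nonneg (by positivity) hApos.le
      have ht1 : 1 ≤ t := by rw [htdef]; linarith
      have htA : t * A = 2 * (|B| + C0) + A := by
        rw [htdef]; field_simp
      have hq' := hq t (by linarith)
      have h1 : (1 / 2) * A * t ^ 2 = (1 / 2) * (t * A) * t := by ring
      rw [htA] at h1
      nlinarith [hq', h1, ht1, hC0nn, hApos, le_abs_self B, neg_abs_le B, abs_nonneg B,
        mul_le_mul_of_nonneg_right (neg_abs_le B) (by linarith : (0:ℝ) ≤ t),
        mul_le_mul_of_nonneg_left ht1 hC0nn]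
    have hTv : T i v = 0 := aux_Tv_zero (T i) (hsa i) (hpsd i) v (hA ▸ hAzero)
    refine ⟨hTv, ?_⟩
    have hBcv : B = ⟪c i, v⟫ := by rw [hB, hTv]; simp
    by_contra hcv
    push_neg at hcv
    have hpos : (0:ℝ) < ⟪c i, v⟫ := hcv
    have ht := hq ((C0 + 1) / ⟪c i, v⟫) (le_of_lt (div_pos (by linarith) hpos))
    rw [hAzero, hBcv] at ht
    have hmul : ⟪c i, v⟫ * ((C0 + 1) / ⟪c i, v⟫) = C0 + 1 := by field_simp
    nlinarith [ht, hmul]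
  · intro hv x hx t ht
    rw [hF] at hx ⊢
    intro i
    obtain ⟨h1, h2⟩ := hv i
    have hx := hx i
    have hvTx : ⟪v, T i x⟫ = 0 := by
      rw [← hsa i v x, h1]; simp
    have hexp : ⟪x + t • v, T i (x + t • v)⟫ = ⟪x, T i x⟫ := by
      simp only [map_add, map_smul, h1, smul_zero, add_zero, inner_add_left,
        real_inner_smul_left, hvTx]
      ring
    rw [hexp]
    simp only [inner_add_right, real_inner_smul_right]
    nlinarith [mul_nonneg ht (neg_nonneg.mpr h2)]
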